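/- Under the support hypotheses below, for every function g : X → ℂ and every n ∈ ℕ one has supp(T_n(g)) ∩ C ⊆ supp(g) ∩ C. -/

import Mathlib

/-- The operators `T_n` of the star product reduction: `T_0 = id` and
`T_n(f) = -∑_{k=1}^{n} T_{n-k}(M_k(p_J(f), J))` for `n ≥ 1`. -/
noncomputable def Tred {A : Type*} [AddCommGroup A] (J : A) (pJ : A → A)
    (M : ℕ → A → A → A) : ℕ → A → A
  | 0, f => f
  | (n+1), f =>
      -∑ k ∈ (Finset.range (n+1)).attach,
        Tred J pJ M k.1 (M (n+1-k.1) (pJ f) J)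
  termination_by n _ => n
  decreasing_by
    have := k.2
    simp only [Finset.mem_range] at this
    omega

private lemma tsupport_neg' {X α : Type*} [TopologicalSpace X] [AddGroup α] (f : X → α) :
    tsupport (-f) = tsupport f := by
  unfold tsupport
  ext x
  simp

private lemma tsupport_finset_sum {X α ι : Type*} [TopologicalSpace X] [AddCommMonoid α]
    (s : Finset ι) (f : ι → X → α) :
    tsupport (∑ i ∈ s, f i) ⊆ ⋃ i ∈ s, tsupport (f i) := by
  classical
  induction s using Finset.induction_on with
  | empty => simp [tsupport]
  | insert _ _ h ih =>
    rw [Finset.sum_insert h]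
    refine (tsupport_add _ _).trans ?_
    intro x hx
    rcases hx with hx | hx
    · exact Set.mem_biUnion (Finset.mem_insert_self _ _) hx
    · rcases Set.mem_iUnion₂.mp (ih hx) with ⟨i, hi, hxi⟩
      exact Set.mem_biUnion (Finset.mem_insert_of_mem hi) hxi

theorem Tred_support_subset
    {X : Type*} [TopologicalSpace X]
    (J : X → ℂ)
    (pJ : (X → ℂ) →ₗ[ℂ] (X → ℂ))
    (hpJ : ∀ f : X → ℂ,
      tsupport (pJ f) ∩ {x | J x = 0} ⊆ tsupport f ∩ {x | J x = 0})
    (M : ℕ → (X → ℂ) →ₗ[ℂ] (X → ℂ) →ₗ[ℂ] (X → ℂ))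
    (hM : ∀ k, 1 ≤ k → ∀ f g : X → ℂ,
      tsupport (M k f g) ⊆ tsupport f ∩ tsupport g) :
    ∀ (g : X → ℂ) (n : ℕ),
      tsupport (Tred J (pJ ·) (fun k a b => M k a b) n g) ∩ {x | J x = 0}
        ⊆ tsupport g ∩ {x | J x = 0} := by
  intro g n
  induction n using Nat.strong_induction_on generalizing g with
  | _ n ih =>
    match n with
    | 0 => rw [Tred]
    | (m+1) =>
      rw [Tred]
      intro x hx
      obtain ⟨hx1, hx2⟩ := hx
      rw [tsupport_neg'] at hx1
      rcases Set.mem_iUnion₂.mp (tsupport_finset_sum _ _ hx1) with ⟨k, _, hxk⟩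
      have hk : k.1 < m + 1 := Finset.mem_range.mp k.2
      have h1 := ih k.1 hk (M (m+1-k.1) (pJ g) J) ⟨hxk, hx2⟩
      have h2 := hM (m+1-k.1) (by omega) (pJ g) J h1.1
      exact hpJ g ⟨h2.1, hx2⟩
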